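/- For all real η ≠ 0 and ξ ∈ ℝ, the functions on ℝ³ given by π₀₁(x) = (ξ/(2η)) tanh(η x₂) (1/cosh(η x₁)) (cos²(η x₀) sinh²(η x₁) − sin²(η x₀)), π₀₂(x) = −(1/(2η)) sin(η x₀) cosh(η x₁) + (1/(2η)) sinh(η x₁) (sin(η x₀) tanh(η x₁) − ξ cos²(η x₀)), π₁₂(x) = −(1/(2η)) sinh(η x₁) cos(η x₀) − (ξ/(2η)) sin(η x₀) cos(η x₀) cosh(η x₁), extended antisymmetrically by π_ba = −π_ab and π_aa = 0, satisfy the Jacobi identity for a Poisson bivector: for all x ∈ ℝ³, Σ_{l=0}^{2} ( π_{0l}(x) ∂_l π_{12}(x) + π_{1l}(x) ∂_l π_{20}(x) + π_{2l}(x) ∂_l π_{01}(x) ) = 0, where ∂_l denotes the partial derivative in the variable x_l. Hence these functions define the twisted κ-AdS Poisson homogeneous structure on AdS₃. -/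

import Mathlib

open Real

/-- `π₀₁` for the twisted κ-AdS Poisson structure on AdS₃. -/
noncomputable def pi01 (η ξ : ℝ) (x : Fin 3 → ℝ) : ℝ :=
  (ξ / (2 * η)) * Real.tanh (η * x 2) * (1 / Real.cosh (η * x 1)) *
    ((Real.cos (η * x 0)) ^ 2 * (Real.sinh (η * x 1)) ^ 2 - (Real.sin (η * x 0)) ^ 2)

/-- `π₀₂` for the twisted κ-AdS Poisson structure on AdS₃. -/
noncomputable def pi02 (η ξ : ℝ) (x : Fin 3 → ℝ) : ℝ :=
  -(1 / (2 * η)) * Real.sin (η * x 0) * Real.cosh (η * x 1) +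
    (1 / (2 * η)) * Real.sinh (η * x 1) *
      (Real.sin (η * x 0) * Real.tanh (η * x 1) - ξ * (Real.cos (η * x 0)) ^ 2)

/-- `π₁₂` for the twisted κ-AdS Poisson structure on AdS₃. -/
noncomputable def pi12 (η ξ : ℝ) (x : Fin 3 → ℝ) : ℝ :=
  -(1 / (2 * η)) * Real.sinh (η * x 1) * Real.cos (η * x 0) -
    (ξ / (2 * η)) * Real.sin (η * x 0) * Real.cos (η * x 0) * Real.cosh (η * x 1)

/-- The skew-symmetric bivector matrix `π_ab` of the twisted κ-AdS structure. -/
noncomputable def piKAdS (η ξ : ℝ) (a b : Fin 3) (x : Fin 3 → ℝ) : ℝ :=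
  !![0, pi01 η ξ x, pi02 η ξ x;
     -(pi01 η ξ x), 0, pi12 η ξ x;
     -(pi02 η ξ x), -(pi12 η ξ x), 0] a b

lemma my_hasDerivAt_tanh (u : ℝ) : HasDerivAt Real.tanh (1 / Real.cosh u ^ 2) u := by
  have h := (Real.hasDerivAt_sinh u).div (Real.hasDerivAt_cosh u) (Real.cosh_pos u).ne'
  have e : (Real.sinh / Real.cosh) = Real.tanh := by
    funext y; exact (Real.tanh_eq_sinh_div_cosh y).symm
  rw [e] at h
  refine h.congr_deriv ?_
  have h2 := Real.cosh_sq_sub_sinh_sq u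
  rw [← h2]; ring

lemma hasFDerivAt_coord (i : Fin 3) (x : Fin 3 → ℝ) :
    HasFDerivAt (fun y : Fin 3 → ℝ => y i)
      (ContinuousLinearMap.proj (R := ℝ) (φ := fun _ : Fin 3 => ℝ) i) x := by
  exact (ContinuousLinearMap.proj (R := ℝ) (φ := fun _ : Fin 3 => ℝ) i).hasFDerivAt

set_option maxHeartbeats 2000000 in
/-- For all real `η ≠ 0` and `ξ`, the twisted κ-AdS bivector components
satisfy the Jacobi identity `Σ_l (π₀ₗ ∂ₗπ₁₂ + π₁ₗ ∂ₗπ₂₀ + π₂ₗ ∂ₗπ₀₁) = 0` at every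
point of `ℝ³`, hence define a Poisson structure on AdS₃. -/
theorem twisted_kappa_AdS_jacobi (η ξ : ℝ) (hη : η ≠ 0) :
    ∀ x : Fin 3 → ℝ,
      ∑ l : Fin 3,
        (piKAdS η ξ 0 l x * fderiv ℝ (piKAdS η ξ 1 2) x (Pi.single l 1) +
         piKAdS η ξ 1 l x * fderiv ℝ (piKAdS η ξ 2 0) x (Pi.single l 1) +
         piKAdS η ξ 2 l x * fderiv ℝ (piKAdS η ξ 0 1) x (Pi.single l 1)) = 0 := by
  intro x
  have hu : ∀ i : Fin 3, HasFDerivAt (fun y : Fin 3 → ℝ => η * y i)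
      (η • ContinuousLinearMap.proj (R := ℝ) (φ := fun _ : Fin 3 => ℝ) i) x :=
    fun i => (hasFDerivAt_coord i x).const_mul η
  -- elementary pieces
  have hs0 := (Real.hasDerivAt_sin (η * x 0)).comp_hasFDerivAt x (hu 0)
  have hc0 := (Real.hasDerivAt_cos (η * x 0)).comp_hasFDerivAt x (hu 0)
  have hsh1 := (Real.hasDerivAt_sinh (η * x 1)).comp_hasFDerivAt x (hu 1)
  have hch1 := (Real.hasDerivAt_cosh (η * x 1)).comp_hasFDerivAt x (hu 1)
  have hth1 := (my_hasDerivAt_tanh (η * x 1)).comp_hasFDerivAt x (hu 1)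
  have hth2 := (my_hasDerivAt_tanh (η * x 2)).comp_hasFDerivAt x (hu 2)
  have hic1 := (((hasDerivAt_const (η * x 1) (1:ℝ)).div (Real.hasDerivAt_cosh (η * x 1))
      (Real.cosh_pos (η * x 1)).ne')).comp_hasFDerivAt x (hu 1)
  have hs0sq := ((hasDerivAt_pow 2 (Real.sin (η * x 0))).comp_hasFDerivAt x hs0)
  have hc0sq := ((hasDerivAt_pow 2 (Real.cos (η * x 0))).comp_hasFDerivAt x hc0)
  have hsh1sq := ((hasDerivAt_pow 2 (Real.sinh (η * x 1))).comp_hasFDerivAt x hsh1)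
  -- derivatives of the pi's
  have H01 : HasFDerivAt (pi01 η ξ) _ x :=
    (((hth2.const_mul (ξ / (2*η))).mul hic1).mul ((hc0sq.mul hsh1sq).sub hs0sq))
  have H02 : HasFDerivAt (pi02 η ξ) _ x :=
    (((hs0.const_mul (-(1/(2*η)))).mul hch1).add
      ((hsh1.const_mul (1/(2*η))).mul ((hs0.mul hth1).sub (hc0sq.const_mul ξ))))
  have H12 : HasFDerivAt (pi12 η ξ) _ x :=
    (((hsh1.const_mul (-(1/(2*η)))).mul hc0).sub
      (((hs0.const_mul (ξ / (2*η))).mul hc0).mul hch1))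
  have e01 : piKAdS η ξ 0 1 = pi01 η ξ := by funext y; simp [piKAdS]
  have e12 : piKAdS η ξ 1 2 = pi12 η ξ := by funext y; simp [piKAdS]
  have e20 : piKAdS η ξ 2 0 = fun y => -pi02 η ξ y := by funext y; simp [piKAdS]
  rw [Fin.sum_univ_three, e01, e12, e20, H01.fderiv, H12.fderiv, (show HasFDerivAt (fun y => -pi02 η ξ y) _ x from H02.neg).fderiv]
  simp only [piKAdS, Matrix.cons_val', Matrix.cons_val_zero, Matrix.cons_val_one,
    Matrix.head_cons, Matrix.empty_val', Matrix.cons_val_fin_one, Matrix.head_fin_const,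
    Matrix.cons_val_two, Matrix.tail_cons, Matrix.of_apply,
    ContinuousLinearMap.add_apply, ContinuousLinearMap.sub_apply,
    ContinuousLinearMap.smul_apply, ContinuousLinearMap.neg_apply,
    ContinuousLinearMap.proj_apply, Pi.single_apply, smul_eq_mul, Function.comp_apply,
    Pi.mul_apply, Pi.div_apply]
  simp only [show ((0:Fin 3) = 1) = False by decide, show ((0:Fin 3) = 2) = False by decide,
    show ((1:Fin 3) = 0) = False by decide, show ((1:Fin 3) = 2) = False by decide,
    show ((2:Fin 3) = 0) = False by decide, show ((2:Fin 3) = 1) = False by decide,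
    show ((0:Fin 3) = 0) = True by decide, show ((1:Fin 3) = 1) = True by decide,
    show ((2:Fin 3) = 2) = True by decide, if_true, if_false, mul_zero, zero_mul,
    mul_one, one_mul, add_zero, zero_add]
  unfold pi01 pi02 pi12
  simp only [Real.tanh_eq_sinh_div_cosh]
  have hc1 := (Real.cosh_pos (η*x 1)).ne'
  have hc2 := (Real.cosh_pos (η*x 2)).ne'
  field_simp
  ring_nf
  have h2 : Real.cosh (η*x 1) ^ 2 - Real.sinh (η*x 1) ^ 2 = 1 := Real.cosh_sq_sub_sinh_sq _
  linear_combination (ξ * Real.sinh (η*x 2) * Real.cos (η*x 0) * Real.sin (η*x 0)) *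
      (-2 * η * Real.sinh (η*x 1)^2 * Real.sin (η*x 0)
       + 2 * ξ * η * Real.cos (η*x 0)^2 * Real.sinh (η*x 1) * Real.cosh (η*x 1)) * h2
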